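/- arXiv:2407.12333 — 3 statements merged into one kernel-verified Lean document; each statement's English description precedes it below -/
import Mathlib

section
/- Let n ≥ q ≥ 1 and let L: ℝⁿ → ℝ^q be a linear map of rank q − 1. Then there exist a linear isomorphism Φ of ℝⁿ, a generalized positive permutation matrix C ∈ G_gp ⊂ GL(q, ℝ), an integer l with 0 ≤ l ≤ q − 1, and signs δ₁, …, δ_l ∈ {−1, +1} such that C · (L ∘ Φ) is the linear map (x₁, …, xₙ) ↦ (x₁, …, x_{q−1}, Σ_{j=1}^{l} δⱼ xⱼ). -/
open Matrix LinearMap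

/-- A generalized positive permutation matrix: a product of a diagonal matrix with
strictly positive diagonal entries and a permutation matrix. -/
def IsGenPosPerm {q : ℕ} (C : Matrix (Fin q) (Fin q) ℝ) : Prop :=
  ∃ (d : Fin q → ℝ) (σ : Equiv.Perm (Fin q)),
    (∀ i, 0 < d i) ∧ C = Matrix.diagonal d * σ.permMatrix ℝ

lemma range_domRestrict_of_isCompl' {V W : Type*} [AddCommGroup V] [Module ℝ V] [AddCommGroup W]
    [Module ℝ W] (f : V →ₗ[ℝ] W) (p : Submodule ℝ V) (hp : IsCompl (ker f) p) :
    range (f.domRestrict p) = range f := by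
  rw [range_domRestrict]
  have h1 : Submodule.map f (ker f) ⊔ Submodule.map f p = range f := by
    rw [← Submodule.map_sup, hp.sup_eq_top, Submodule.map_top]
  have h2 : Submodule.map f (ker f) = ⊥ := by
    ext y
    simp only [Submodule.mem_map, mem_ker, Submodule.mem_bot]
    constructor
    · rintro ⟨x, hx, rfl⟩; exact hx
    · rintro rfl; exact ⟨0, map_zero f, map_zero f⟩
  rwa [h2, bot_sup_eq] at h1

lemma exists_comp_eq' {V W : Type*} [AddCommGroup V] [Module ℝ V] [AddCommGroup W] [Module ℝ W]
    [FiniteDimensional ℝ V] (f g : V →ₗ[ℝ] W) (h : range f = range g) :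
    ∃ e : V ≃ₗ[ℝ] V, ∀ x, f (e x) = g x := by
  obtain ⟨pf, hpf⟩ := Submodule.exists_isCompl (ker f)
  obtain ⟨pg, hpg⟩ := Submodule.exists_isCompl (ker g)
  have hinjf : Function.Injective (f.domRestrict pf) := by
    rw [injective_domRestrict_iff]; exact hpf.disjoint.symm
  have hinjg : Function.Injective (g.domRestrict pg) := by
    rw [injective_domRestrict_iff]; exact hpg.disjoint.symm
  have hrf := range_domRestrict_of_isCompl' f pf hpf
  have hrg := range_domRestrict_of_isCompl' g pg hpg
  let ef : pf ≃ₗ[ℝ] range f :=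
    (LinearEquiv.ofInjective _ hinjf).trans (LinearEquiv.ofEq _ _ hrf)
  let eg : pg ≃ₗ[ℝ] range g :=
    (LinearEquiv.ofInjective _ hinjg).trans (LinearEquiv.ofEq _ _ hrg)
  have hfr : Module.finrank ℝ (ker g) = Module.finrank ℝ (ker f) := by
    have h1 := f.finrank_range_add_finrank_ker
    have h2 := g.finrank_range_add_finrank_ker
    rw [h] at h1
    omega
  let κ : (ker g : Submodule ℝ V) ≃ₗ[ℝ] (ker f : Submodule ℝ V) :=
    LinearEquiv.ofFinrankEq _ _ hfr
  let π : (pg : Submodule ℝ V) ≃ₗ[ℝ] pf :=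
    (eg.trans (LinearEquiv.ofEq _ _ h.symm)).trans ef.symm
  refine ⟨((Submodule.prodEquivOfIsCompl _ _ hpg).symm.trans (κ.prodCongr π)).trans
    (Submodule.prodEquivOfIsCompl _ _ hpf), fun x => ?_⟩
  obtain ⟨⟨a, b⟩, rfl⟩ := (Submodule.prodEquivOfIsCompl (ker g) pg hpg).surjective x
  have hef : ∀ z : pf, f z = (ef z : W) := fun z => rfl
  have heg : ∀ z : pg, g z = (eg z : W) := fun z => rfl
  have hka : f ((κ a : V)) = 0 := (κ a).2
  have hga : g ((a : V)) = 0 := a.2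
  have e1 : (((Submodule.prodEquivOfIsCompl _ _ hpg).symm.trans (κ.prodCongr π)).trans
      (Submodule.prodEquivOfIsCompl _ _ hpf)) ((Submodule.prodEquivOfIsCompl (ker g) pg hpg) (a,b))
      = (κ a : V) + (π b : V) := by
    rw [LinearEquiv.trans_apply, LinearEquiv.trans_apply, LinearEquiv.symm_apply_apply]
    rfl
  rw [e1, Submodule.coe_prodEquivOfIsCompl', map_add, map_add, hka, hga, zero_add, zero_add,
    hef, heg]
  show ((ef (π b) : W)) = _
  have : ef (π b) = LinearEquiv.ofEq _ _ h.symm (eg b) := by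
    simp [π, LinearEquiv.apply_symm_apply]
  rw [this]
  rfl

set_option maxHeartbeats 800000 in
theorem stmt9 (n q : ℕ) (hq : 1 ≤ q) (hqn : q ≤ n)
    (L : (Fin n → ℝ) →ₗ[ℝ] (Fin q → ℝ))
    (hrank : Module.finrank ℝ (LinearMap.range L) = q - 1) :
    ∃ (Φ : (Fin n → ℝ) ≃ₗ[ℝ] (Fin n → ℝ)) (C : Matrix (Fin q) (Fin q) ℝ)
      (l : ℕ) (hl : l ≤ q - 1) (δ : Fin l → ℝ),
      IsGenPosPerm C ∧ (∀ j, δ j = 1 ∨ δ j = -1) ∧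
      ∀ (x : Fin n → ℝ) (i : Fin q),
        C.mulVec (L (Φ x)) i =
          if (i : ℕ) < q - 1 then x (Fin.castLE hqn i)
          else ∑ j : Fin l, δ j * x (Fin.castLE (by omega) j) := by
  classical
  -- Step 1: a nonzero vector annihilating the range of L
  obtain ⟨v, hv0, hvL⟩ : ∃ v : Fin q → ℝ, v ≠ 0 ∧ ∀ x, v ⬝ᵥ L x = 0 := by
    set A : Matrix (Fin q) (Fin n) ℝ := LinearMap.toMatrix' L with hA
    have hmvl : A.mulVecLin = L := Matrix.toLin'_toMatrix' L
    have hArank : A.rank = q - 1 := by rw [Matrix.rank, hmvl, hrank]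
    have hAtrank : (Aᵀ).rank = q - 1 := by rw [Matrix.rank_transpose, hArank]
    have hker : ker (Aᵀ).mulVecLin ≠ ⊥ := by
      have h1 := (Aᵀ).mulVecLin.finrank_range_add_finrank_ker
      rw [show (range (Aᵀ).mulVecLin) = range (Aᵀ).mulVecLin from rfl] at h1
      have h2 : Module.finrank ℝ (range (Aᵀ).mulVecLin) = q - 1 := hAtrank
      have h3 : Module.finrank ℝ (Fin q → ℝ) = q := by
        simp [Module.finrank_pi]
      intro hbot
      rw [hbot] at h1
      simp [finrank_bot] at h1
      omega
    obtain ⟨v, hv, hv0⟩ := Submodule.exists_mem_ne_zero_of_ne_bot hker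
    refine ⟨v, hv0, fun x => ?_⟩
    have hv' : (Aᵀ).mulVec v = 0 := hv
    have : L x = A.mulVec x := by rw [← hmvl]; rfl
    rw [this, Matrix.dotProduct_mulVec, ← Matrix.mulVec_transpose, hv', zero_dotProduct]
  classical
  -- support of v
  set s : Finset (Fin q) := Finset.univ.filter (fun i => v i ≠ 0) with hs
  have hsne : s.Nonempty := by
    obtain ⟨i, hi⟩ := Function.ne_iff.mp hv0
    exact ⟨i, by simpa [hs] using hi⟩
  set m : ℕ := s.card with hm
  have hm1 : 1 ≤ m := Finset.card_pos.mpr hsne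
  have hmq : m ≤ q := by
    have := Finset.card_filter_le (Finset.univ : Finset (Fin q)) (fun i => v i ≠ 0)
    simpa [hm, hs] using this
  set l : ℕ := m - 1 with hldef
  have hl : l ≤ q - 1 := by omega
  have hlq : l < q := by omega
  -- the predicate p
  set p : Fin q → Prop := fun i => (i : ℕ) < l ∨ (i : ℕ) = q - 1 with hp
  set lastq : Fin q := ⟨q - 1, by omega⟩ with hlastq
  have hT : Finset.univ.filter p = insert lastq (Finset.Iio (⟨l, hlq⟩ : Fin q)) := by
    ext i
    simp only [Finset.mem_filter, Finset.mem_univ, true_and, Finset.mem_insert,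
      Finset.mem_Iio, Fin.lt_def, hp, hlastq, Fin.ext_iff]
    omega
  have hnm : lastq ∉ Finset.Iio (⟨l, hlq⟩ : Fin q) := by
    simp only [Finset.mem_Iio, Fin.lt_def, hlastq]
    omega
  have hTcard : (Finset.univ.filter p).card = l + 1 := by
    rw [hT, Finset.card_insert_of_notMem hnm, Fin.card_Iio]
  -- the permutation
  have hcards : Fintype.card {i : Fin q // p i} = Fintype.card {i : Fin q // v i ≠ 0} := by
    rw [Fintype.card_subtype, Fintype.card_subtype, hTcard, ← hs]
    omega
  have hcardsc : Fintype.card {i : Fin q // ¬ p i} = Fintype.card {i : Fin q // ¬ v i ≠ 0} := by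
    rw [Fintype.card_subtype_compl, Fintype.card_subtype_compl, hcards]
  set ep := Fintype.equivOfCardEq hcards with hep
  set en := Fintype.equivOfCardEq hcardsc with hen
  set σ : Equiv.Perm (Fin q) := Equiv.subtypeCongr ep en with hσ
  have hσp : ∀ i, p i → v (σ i) ≠ 0 := by
    intro i h
    have : σ i = ↑(ep ⟨i, h⟩) := by
      rw [hσ, Equiv.subtypeCongr, Equiv.trans_apply, Equiv.trans_apply,
        Equiv.sumCompl_symm_apply_of_pos h, Equiv.sumCongr_apply, Sum.map_inl,
        Equiv.sumCompl_apply_inl]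
    rw [this]
    exact (ep ⟨i, h⟩).2
  have hσn : ∀ i, ¬ p i → v (σ i) = 0 := by
    intro i h
    have : σ i = ↑(en ⟨i, h⟩) := by
      rw [hσ, Equiv.subtypeCongr, Equiv.trans_apply, Equiv.trans_apply,
        Equiv.sumCompl_symm_apply_of_neg h, Equiv.sumCongr_apply, Sum.map_inr,
        Equiv.sumCompl_apply_inr]
    rw [this]
    exact not_not.mp (en ⟨i, h⟩).2
  have hln : l ≤ n := by omega
  have hplast : p lastq := Or.inr rfl
  set c : ℝ := v (σ lastq) with hc
  have hc0 : c ≠ 0 := hσp lastq hplast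
  set d : Fin q → ℝ := fun i => if v (σ i) = 0 then 1 else |v (σ i)| with hd
  have hdpos : ∀ i, 0 < d i := by
    intro i
    rw [hd]
    dsimp only
    split
    · norm_num
    · exact abs_pos.mpr (by assumption)
  set δ : Fin l → ℝ := fun j => -(Real.sign c) * Real.sign (v (σ (Fin.castLE hlq.le j))) with hδ
  have hδpm : ∀ j, δ j = 1 ∨ δ j = -1 := by
    intro j
    have h1 := Real.sign_apply_eq_of_ne_zero c hc0
    have h2 := Real.sign_apply_eq_of_ne_zero _
      (hσp (Fin.castLE hlq.le j) (Or.inl (by simpa using j.2)))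
    rcases h1 with h1 | h1 <;> rcases h2 with h2 | h2 <;> rw [hδ] <;> dsimp only <;>
      rw [h1, h2] <;> norm_num
  have hsgnabs : ∀ r : ℝ, r ≠ 0 → Real.sign r * |r| = r := by
    intro r hr
    rcases lt_or_gt_of_ne hr with h | h
    · rw [Real.sign_of_neg h, abs_of_neg h]; ring
    · rw [Real.sign_of_pos h, abs_of_pos h]; ring
  -- the linear functional
  set φ : (Fin q → ℝ) →ₗ[ℝ] ℝ :=
    LinearMap.proj lastq - ∑ j : Fin l, δ j • LinearMap.proj (Fin.castLE hlq.le j) with hφ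
  have hφap : ∀ y : Fin q → ℝ,
      φ y = y lastq - ∑ j : Fin l, δ j * y (Fin.castLE hlq.le j) := by
    intro y
    rw [hφ]
    simp [LinearMap.sub_apply, LinearMap.sum_apply, LinearMap.smul_apply, LinearMap.proj_apply]
  -- the model map
  set M : (Fin n → ℝ) →ₗ[ℝ] (Fin q → ℝ) :=
    LinearMap.pi (fun i : Fin q => if (i : ℕ) < q - 1 then LinearMap.proj (Fin.castLE hqn i)
      else ∑ j : Fin l, δ j • LinearMap.proj (Fin.castLE hln j)) with hM
  have hMap : ∀ (x : Fin n → ℝ) (i : Fin q), M x i =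
      if (i : ℕ) < q - 1 then x (Fin.castLE hqn i)
      else ∑ j : Fin l, δ j * x (Fin.castLE hln j) := by
    intro x i
    rw [hM, LinearMap.pi_apply]
    split <;> simp
  -- the scaling-permutation equivalence
  set Ef : (Fin q → ℝ) →ₗ[ℝ] (Fin q → ℝ) :=
    LinearMap.pi (fun i : Fin q => d i • LinearMap.proj (σ i)) with hEf
  set Eg : (Fin q → ℝ) →ₗ[ℝ] (Fin q → ℝ) :=
    LinearMap.pi (fun j : Fin q => (d (σ.symm j))⁻¹ • LinearMap.proj (σ.symm j)) with hEg
  have hEfap : ∀ (y : Fin q → ℝ) i, Ef y i = d i * y (σ i) := by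
    intro y i; rw [hEf, LinearMap.pi_apply]; simp
  have hEgap : ∀ (y : Fin q → ℝ) j, Eg y j = (d (σ.symm j))⁻¹ * y (σ.symm j) := by
    intro y j; rw [hEg, LinearMap.pi_apply]; simp
  set E : (Fin q → ℝ) ≃ₗ[ℝ] (Fin q → ℝ) := LinearEquiv.ofLinear Ef Eg
    (by
      refine LinearMap.ext fun y => funext fun i => ?_
      rw [LinearMap.comp_apply, hEfap, hEgap]
      simp only [Equiv.symm_apply_apply, LinearMap.id_coe, id_eq]
      rw [mul_inv_cancel_left₀ (hdpos i).ne'])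
    (by
      refine LinearMap.ext fun y => funext fun j => ?_
      rw [LinearMap.comp_apply, hEgap, hEfap]
      simp only [Equiv.apply_symm_apply, LinearMap.id_coe, id_eq]
      rw [inv_mul_cancel_left₀ (hdpos (σ.symm j)).ne']) with hE
  set N : (Fin n → ℝ) →ₗ[ℝ] (Fin q → ℝ) := E.toLinearMap ∘ₗ L with hN
  have hNap : ∀ (x : Fin n → ℝ) i, N x i = d i * (L x) (σ i) := by
    intro x i
    rw [hN, LinearMap.comp_apply]
    exact hEfap (L x) i
  -- key sum identity
  have hkey : ∀ z : Fin q → ℝ, (∑ i : Fin q, v i * z i)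
      = v (σ lastq) * z (σ lastq)
        + ∑ j : Fin l, v (σ (Fin.castLE hlq.le j)) * z (σ (Fin.castLE hlq.le j)) := by
    intro z
    rw [← Equiv.sum_comp σ (fun i => v i * z i)]
    rw [← Finset.sum_filter_of_ne (p := p)
      (fun i _ hne => by by_contra hnp; exact hne (by rw [hσn i hnp, zero_mul]))]
    rw [hT, Finset.sum_insert hnm]
    refine congrArg (v (σ lastq) * z (σ lastq) + ·) ?_
    refine Finset.sum_bij' (fun a ha => (⟨(a : ℕ), by simpa [Fin.lt_def] using ha⟩ : Fin l))
      (fun b _ => Fin.castLE hlq.le b) ?_ ?_ ?_ ?_ ?_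
    · intros; exact Finset.mem_univ _
    · intro b _
      simp only [Finset.mem_Iio, Fin.lt_def]
      exact b.2
    · intro a ha; rfl
    · intro b _; rfl
    · intro a ha; rfl
  -- auxiliary sign facts
  have hsc2 : Real.sign c * Real.sign c = 1 := by
    rcases Real.sign_apply_eq_of_ne_zero c hc0 with h | h <;> rw [h] <;> norm_num
  have hdlast : d lastq = |c| := by
    rw [hd]; dsimp only; rw [if_neg (by rw [← hc]; exact hc0)]
  have hdj : ∀ j : Fin l, δ j * d (Fin.castLE hlq.le j)
      = -(Real.sign c) * v (σ (Fin.castLE hlq.le j)) := by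
    intro j
    have hvj : v (σ (Fin.castLE hlq.le j)) ≠ 0 := hσp _ (Or.inl (by simpa using j.2))
    rw [hδ, hd]; dsimp only
    rw [if_neg hvj, mul_assoc, hsgnabs _ hvj]
  -- range N is contained in ker φ
  have hφN : ∀ x, φ (N x) = 0 := by
    intro x
    have h0 : ∑ i : Fin q, v i * L x i = 0 := by
      have := hvL x
      simpa [dotProduct] using this
    have hkeyx := hkey (L x)
    rw [h0] at hkeyx
    rw [hφap]
    have hsum : ∑ j : Fin l, δ j * N x (Fin.castLE hlq.le j)
        = -(Real.sign c)
          * ∑ j : Fin l, v (σ (Fin.castLE hlq.le j)) * L x (σ (Fin.castLE hlq.le j)) := by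
      rw [Finset.mul_sum]
      refine Finset.sum_congr rfl fun j _ => ?_
      rw [hNap x (Fin.castLE hlq.le j), ← mul_assoc, hdj j, mul_assoc]
    rw [hNap x lastq, hsum]
    have hsum2 : ∑ j : Fin l, v (σ (Fin.castLE hlq.le j)) * L x (σ (Fin.castLE hlq.le j))
        = -(v (σ lastq) * L x (σ lastq)) := by linarith [hkeyx]
    rw [hsum2, hdlast]
    have hscc : Real.sign c * c = |c| := by
      have h4 : Real.sign c * c = Real.sign c * (Real.sign c * |c|) :=
        congrArg (fun t => Real.sign c * t) (hsgnabs c hc0).symm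
      rw [h4, ← mul_assoc, hsc2, one_mul]
    have h3 : Real.sign c * (c * L x (σ lastq)) = |c| * L x (σ lastq) := by
      rw [← mul_assoc, hscc]
    calc |c| * L x (σ lastq) - -Real.sign c * -(v (σ lastq) * L x (σ lastq))
        = |c| * L x (σ lastq) - Real.sign c * (c * L x (σ lastq)) := by rw [hc]; ring
      _ = 0 := by rw [h3, sub_self]
  -- dimension counts
  have hpiq : Module.finrank ℝ (Fin q → ℝ) = q := by simp
  have hφ1 : φ (Pi.single lastq 1) = 1 := by
    rw [hφap]
    rw [Pi.single_eq_same, Finset.sum_eq_zero, sub_zero]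
    intro j _
    rw [Pi.single_eq_of_ne, mul_zero]
    intro hEq
    have h1 := congrArg Fin.val hEq
    simp only [Fin.coe_castLE, hlastq] at h1
    have := j.2
    omega
  have hkerφ : Module.finrank ℝ (ker φ) = q - 1 := by
    have h1 := φ.finrank_range_add_finrank_ker
    rw [hpiq] at h1
    have h2 : Module.finrank ℝ (range φ) = 1 := by
      have hle : Module.finrank ℝ (range φ) ≤ 1 := by
        simpa using Submodule.finrank_le (range φ)
      have hpos : 0 < Module.finrank ℝ (range φ) := by
        rw [Module.finrank_pos_iff_exists_ne_zero]
        refine ⟨⟨1, ⟨Pi.single lastq 1, hφ1⟩⟩, ?_⟩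
        intro h
        have h5 := congrArg Subtype.val h
        norm_num at h5
      omega
    omega
  have hrangeN : range N = ker φ := by
    apply Submodule.eq_of_le_of_finrank_eq
    · rintro y ⟨x, rfl⟩
      exact hφN x
    · have hmap : range N = Submodule.map (E : (Fin q → ℝ) →ₗ[ℝ] (Fin q → ℝ)) (range L) := by
        rw [hN, LinearMap.range_comp]
      rw [hmap, hkerφ, LinearEquiv.finrank_map_eq, hrank]
  have hrangeM : range M = ker φ := by
    apply le_antisymm
    · rintro y ⟨x, rfl⟩
      rw [LinearMap.mem_ker, hφap]
      have h1 : M x lastq = ∑ j : Fin l, δ j * x (Fin.castLE hln j) := by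
        rw [hMap, if_neg (by simp [hlastq])]
      have h2 : ∀ j : Fin l, M x (Fin.castLE hlq.le j) = x (Fin.castLE hln j) := by
        intro j
        rw [hMap, if_pos (show ((Fin.castLE hlq.le j : Fin q) : ℕ) < q - 1 from
          lt_of_lt_of_le j.2 hl)]
        rfl
      have h3 : ∑ j : Fin l, δ j * M x (Fin.castLE hlq.le j)
          = ∑ j : Fin l, δ j * x (Fin.castLE hln j) :=
        Finset.sum_congr rfl (fun j _ => by rw [h2 j])
      rw [h3, h1, sub_self]
    · intro y hy
      rw [LinearMap.mem_ker, hφap, sub_eq_zero] at hy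
      refine ⟨(fun i : Fin n => if h : (i : ℕ) < q then y ⟨(i : ℕ), h⟩ else 0), ?_⟩
      funext i
      rw [hMap]
      by_cases hi : (i : ℕ) < q - 1
      · rw [if_pos hi, dif_pos (show ((Fin.castLE hqn i : Fin n) : ℕ) < q from i.2)]
        rfl
      · rw [if_neg hi]
        have hieq : i = lastq := by
          have h6 := i.2
          rw [hlastq]
          ext
          show (i : ℕ) = q - 1
          omega
        rw [hieq]
        have h7 : (∑ j : Fin l, δ j * if h : ((Fin.castLE hln j : Fin n) : ℕ) < q
              then y ⟨((Fin.castLE hln j : Fin n) : ℕ), h⟩ else 0)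
            = ∑ j : Fin l, δ j * y (Fin.castLE hlq.le j) := by
          refine Finset.sum_congr rfl fun j _ => ?_
          rw [dif_pos (show ((Fin.castLE hln j : Fin n) : ℕ) < q from lt_of_lt_of_le
            (lt_of_lt_of_le j.2 hl) (by omega))]
          rfl
        rw [h7]
        exact hy.symm
  obtain ⟨Φ, hΦ⟩ := exists_comp_eq' N M (hrangeN.trans hrangeM.symm)
  refine ⟨Φ, Matrix.diagonal d * σ.permMatrix ℝ, l, hl, δ, ⟨d, σ, hdpos, rfl⟩, hδpm, ?_⟩
  intro x i
  have hCv : (Matrix.diagonal d * σ.permMatrix ℝ).mulVec (L (Φ x)) i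
      = d i * (L (Φ x)) (σ i) := by
    rw [Equiv.Perm.permMatrix, PEquiv.mul_toMatrix_toPEquiv, Matrix.mulVec, dotProduct]
    rw [← Equiv.sum_comp σ
      (fun j => ((Matrix.diagonal d).submatrix _root_.id σ.symm) i j * (L (Φ x)) j)]
    simp [Matrix.diagonal_apply, Finset.sum_ite_eq]
  rw [hCv, ← hNap (Φ x) i, hΦ x, hMap]
end

section
/- Fix an integer M ≥ 2, y ∈ ℝ^{M−1}, and a real number F. With f₁, …, f_M defined as in DTLZ1 (f₁ = 0.5(1+F)∏_{i=1}^{M−1} yᵢ, and f_m = 0.5(1+F)(∏_{i=1}^{M−m} yᵢ)(1 − y_{M−m+1}) for 2 ≤ m ≤ M), define g = 1 − f_M/0.6 − Σ_{i=1}^{M−1} fᵢ/0.5. Then g = 1 − (5/6)(1+F)(1 + y₁/5). -/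
lemma key14 (y : ℕ → ℝ) : ∀ n, 1 ≤ n →
    (∏ i ∈ Finset.Icc 1 n, y i) +
      ∑ j ∈ Finset.range (n - 1), (∏ i ∈ Finset.Icc 1 (n - 1 - j), y i) * (1 - y (n - j))
    = y 1 := by
  intro n hn
  induction n, hn using Nat.le_induction with
  | base => simp
  | succ n hn ih =>
    obtain ⟨m, rfl⟩ : ∃ m, n = m + 1 := ⟨n - 1, by omega⟩
    have e : m + 1 + 1 - 1 = m + 1 := rfl
    rw [e, Finset.sum_range_succ']
    simp only [show ∀ j : ℕ, m + 1 - (j + 1) = m - j from fun j => by omega,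
      show ∀ j : ℕ, m + 1 + 1 - (j + 1) = m + 1 - j from fun j => by omega,
      Nat.sub_zero, show m + 1 + 1 - 0 = m + 2 from by omega]
    rw [Finset.prod_Icc_succ_top (show 1 ≤ m + 1 + 1 by omega)]
    simp only [show m + 1 - 1 = m from rfl,
      show ∀ j : ℕ, m + 1 - 1 - j = m - j from fun j => by omega] at ih
    have : m + 1 + 1 = m + 2 := rfl
    rw [this]
    linear_combination ih

theorem stmt14 (M : ℕ) (hM : 2 ≤ M) (y : ℕ → ℝ) (F : ℝ) (f : ℕ → ℝ)
    (hf : ∀ m, f m =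
      if m = 1 then 0.5 * (1 + F) * ∏ i ∈ Finset.Icc 1 (M - 1), y i
      else 0.5 * (1 + F) * (∏ i ∈ Finset.Icc 1 (M - m), y i) * (1 - y (M - m + 1))) :
    1 - f M / 0.6 - ∑ i ∈ Finset.Icc 1 (M - 1), f i / 0.5 =
      1 - 5 / 6 * (1 + F) * (1 + y 1 / 5) := by
  set n := M - 1 with hn
  have hn1 : 1 ≤ n := by omega
  have hMn : M = n + 1 := by omega
  have hfM : f M = 0.5 * (1 + F) * (1 - y 1) := by
    rw [hf M, if_neg (by omega)]
    have h0 : M - M = 0 := by omega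
    rw [h0]
    simp
  have hsum : ∑ i ∈ Finset.Icc 1 n, f i = 0.5 * (1 + F) * y 1 := by
    have e1 : Finset.Icc 1 n = Finset.Ico 1 (n + 1) := by
      ext x; simp [Nat.lt_succ_iff]
    rw [e1, Finset.sum_Ico_eq_sum_range]
    have e2 : n + 1 - 1 = (n - 1) + 1 := by omega
    rw [e2, Finset.sum_range_succ']
    have e3 : ∀ j ∈ Finset.range (n - 1),
        f (1 + (j + 1)) = 0.5 * (1 + F) *
          ((∏ i ∈ Finset.Icc 1 (n - 1 - j), y i) * (1 - y (n - j))) := by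
      intro j hj
      simp only [Finset.mem_range] at hj
      rw [hf (1 + (j + 1)), if_neg (by omega)]
      have hb : M - (1 + (j + 1)) + 1 = n - j := by omega
      have ha : M - (1 + (j + 1)) = n - 1 - j := by omega
      rw [hb, ha]
      ring
    rw [Finset.sum_congr rfl e3, ← Finset.mul_sum]
    rw [hf (1 + 0), if_pos (by omega)]
    linear_combination 0.5 * (1 + F) * key14 y n hn1
  rw [hfM, ← Finset.sum_div, hsum]
  norm_num
  ring
end

section
/- Let n ≥ q ≥ 1 and let g: ℝⁿ → ℝ^q be the linear map g(x) = (x₁, …, x_{q−1}, Σ_{j=1}^{q−1} δⱼxⱼ) for signs δ₁, …, δ_{q−1} ∈ {−1,+1}, together with the quadratic perturbation G(x) = (x₁, …, x_{q−1}, Σ_{j=1}^{q−1} δⱼxⱼ + Σ_{j=q}^{n} δⱼxⱼ²). Then in the module ℝ[[x₁, …, xₙ]]^q, the submodule generated by the partial derivatives ∂G/∂x₁, …, ∂G/∂xₙ together with the elements G₁e₁, …, G_qe_q (where Gᵢ is the i-th component of G and e₁,…,e_q is the standard basis) has real codimension 1, the quotient being spanned by the class of e_q. -/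
open MvPowerSeries Finsupp in
lemma aux_decomp {n : ℕ} (g : MvPowerSeries (Fin n) ℝ)
    (hg : (MvPowerSeries.constantCoeff (σ := Fin n) (R := ℝ)) g = 0) :
    ∃ h : Fin n → MvPowerSeries (Fin n) ℝ,
      g = ∑ j, MvPowerSeries.X j * h j := by
  classical
  refine ⟨fun j => id (α := MvPowerSeries (Fin n) ℝ) fun d => if ∀ k, k < j → d k = 0 then
      MvPowerSeries.coeff (R := ℝ) (d + Finsupp.single j 1) g else 0, ?_⟩
  ext d
  rw [map_sum]
  simp only [X_def, coeff_monomial_mul, one_mul]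
  rcases eq_or_ne d 0 with rfl | hd
  · refine (by simpa using hg : MvPowerSeries.coeff (R := ℝ) 0 g = 0).trans
      (Finset.sum_eq_zero ?_).symm
    intro j _
    rw [if_neg]
    intro hle
    have := hle j
    simp [Finsupp.single_apply] at this
  · have hsupp : d.support.Nonempty := Finsupp.support_nonempty_iff.mpr hd
    set j0 := d.support.min' hsupp with hj0
    have hj0mem : j0 ∈ d.support := d.support.min'_mem hsupp
    have hdj0 : d j0 ≠ 0 := Finsupp.mem_support_iff.mp hj0mem
    rw [Finset.sum_eq_single_of_mem j0 (Finset.mem_univ _)]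
    · have hle : Finsupp.single j0 1 ≤ d :=
        Finsupp.single_le_iff.mpr (Nat.one_le_iff_ne_zero.mpr hdj0)
      rw [if_pos hle]
      show _ = if ∀ k < j0, ((d - Finsupp.single j0 1 : Fin n →₀ ℕ)) k = 0 then
          MvPowerSeries.coeff (R := ℝ) ((d - Finsupp.single j0 1) + Finsupp.single j0 1) g else 0
      rw [if_pos, tsub_add_cancel_of_le hle]
      intro k hk
      rw [Finsupp.tsub_apply, Finsupp.single_apply, if_neg hk.ne', tsub_zero]
      by_contra hkne
      exact absurd (d.support.min'_le k (Finsupp.mem_support_iff.mpr hkne)) (not_le.mpr hk)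
    · intro j _ hj
      split_ifs with h1
      · show (if ∀ k < j, ((d - Finsupp.single j 1 : Fin n →₀ ℕ)) k = 0 then
            MvPowerSeries.coeff (R := ℝ) ((d - Finsupp.single j 1) + Finsupp.single j 1) g else 0) = 0
        rw [if_neg]
        intro hall
        have hj0j : j0 < j := by
          have : j ∈ d.support := Finsupp.mem_support_iff.mpr (by
            have := Finsupp.single_le_iff.mp h1
            omega)
          exact lt_of_le_of_ne (d.support.min'_le j this) hj.symm
        have := hall j0 hj0j
        rw [Finsupp.tsub_apply, Finsupp.single_apply, if_neg hj, tsub_zero] at this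
        exact hdj0 this
      · rfl

open MvPowerSeries in
lemma aux_single_mem {n q : ℕ} (iq : Fin q)
    (M : Submodule (MvPowerSeries (Fin n) ℝ) (Fin q → MvPowerSeries (Fin n) ℝ))
    (h1 : ∀ j : Fin n, Pi.single iq (MvPowerSeries.X j) ∈ M)
    (g : MvPowerSeries (Fin n) ℝ) (hg : (MvPowerSeries.constantCoeff (σ := Fin n) (R := ℝ)) g = 0) :
    (Pi.single iq g : Fin q → MvPowerSeries (Fin n) ℝ) ∈ M := by
  classical
  obtain ⟨h, rfl⟩ := aux_decomp g hg
  have key : (Pi.single iq (∑ j, X j * h j) : Fin q → MvPowerSeries (Fin n) ℝ)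
      = ∑ j, h j • (Pi.single iq (X j) : Fin q → MvPowerSeries (Fin n) ℝ) := by
    funext i
    rcases eq_or_ne i iq with rfl | hi
    · simp [mul_comm]
    · simp [Pi.single_eq_of_ne hi]
  rw [key]
  exact Submodule.sum_mem _ fun j _ => Submodule.smul_mem _ _ (h1 j)

open MvPowerSeries in
lemma aux_mem {n q : ℕ} (iq : Fin q) (hiq : (iq : ℕ) = q - 1) (hq : 1 ≤ q)
    (ε : Fin q → ℝ)
    (M : Submodule (MvPowerSeries (Fin n) ℝ) (Fin q → MvPowerSeries (Fin n) ℝ))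
    (h1 : ∀ j : Fin n, Pi.single iq (MvPowerSeries.X j) ∈ M)
    (h2 : ∀ j : Fin q, (j : ℕ) < q - 1 →
      (Pi.single j 1 + Pi.single iq ((MvPowerSeries.C (σ := Fin n) (R := ℝ)) (ε j)) :
        Fin q → MvPowerSeries (Fin n) ℝ) ∈ M)
    (v : Fin q → MvPowerSeries (Fin n) ℝ)
    (hv : (MvPowerSeries.constantCoeff (σ := Fin n) (R := ℝ)) (v iq)
      = ∑ j : Fin q, if (j : ℕ) < q - 1 then
          ε j * (MvPowerSeries.constantCoeff (σ := Fin n) (R := ℝ)) (v j) else 0) :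
    v ∈ M := by
  classical
  set D : Fin q → (Fin q → MvPowerSeries (Fin n) ℝ) := fun j =>
    Pi.single j 1 + Pi.single iq ((MvPowerSeries.C (σ := Fin n) (R := ℝ)) (ε j)) with hD
  set w := v - ∑ j : Fin q, if (j : ℕ) < q - 1 then v j • D j else 0 with hw
  have hji : ∀ j : Fin q, (j : ℕ) < q - 1 → j ≠ iq := by
    intro j hj h
    rw [h, hiq] at hj; omega
  have hwi : ∀ i, i ≠ iq → w i = 0 := by
    intro i hi
    have hiq1 : (i : ℕ) < q - 1 := by
      have h1 := i.isLt
      have h2 : (i : ℕ) ≠ q - 1 := fun h => hi (Fin.ext (h.trans hiq.symm))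
      omega
    simp only [hw, Pi.sub_apply, Finset.sum_apply]
    rw [sub_eq_zero, Finset.sum_eq_single_of_mem i (Finset.mem_univ _)]
    · rw [if_pos hiq1]
      simp [hD, Pi.single_eq_of_ne (hji i hiq1)]
    · intro j _ hj
      split_ifs with h3
      · simp [hD, Pi.single_eq_of_ne (Ne.symm hj), Pi.single_eq_of_ne (hji i hiq1)]
      · rfl
  have hw2 : (MvPowerSeries.constantCoeff (σ := Fin n) (R := ℝ)) (w iq) = 0 := by
    have hwiq : w iq = v iq - ∑ j : Fin q,
        if (j : ℕ) < q - 1 then v j * (MvPowerSeries.C (σ := Fin n) (R := ℝ)) (ε j) else 0 := by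
      simp only [hw, Pi.sub_apply, Finset.sum_apply]
      congr 1
      refine Finset.sum_congr rfl fun j _ => ?_
      split_ifs with h3
      · simp [hD, Pi.single_eq_of_ne (Ne.symm (hji j h3))]
      · rfl
    rw [hwiq, map_sub, map_sum, hv, sub_eq_zero]
    refine Finset.sum_congr rfl fun j _ => ?_
    split_ifs with h3
    · rw [map_mul, MvPowerSeries.constantCoeff_C, mul_comm]
    · exact (map_zero _).symm
  have hws : w = Pi.single iq (w iq) := by
    funext i
    rcases eq_or_ne i iq with rfl | hi
    · simp
    · rw [hwi i hi, Pi.single_eq_of_ne hi]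
  have hwm : w ∈ M := by
    rw [hws]; exact aux_single_mem iq M h1 (w iq) hw2
  have hv2 : v = w + ∑ j : Fin q, if (j : ℕ) < q - 1 then v j • D j else 0 := by
    rw [hw, sub_add_cancel]
  rw [hv2]
  refine add_mem hwm (Submodule.sum_mem _ fun j _ => ?_)
  split_ifs with h3
  · exact Submodule.smul_mem _ _ (h2 j h3)
  · exact Submodule.zero_mem _

theorem stmt19 (n q : ℕ) (hq : 1 ≤ q) (hqn : q ≤ n)
    (δ : Fin n → ℝ) (hδ : ∀ j, δ j = 1 ∨ δ j = -1)
    (G : Fin q → MvPolynomial (Fin n) ℝ)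
    (hG : ∀ i : Fin q, G i =
      if (i : ℕ) < q - 1 then MvPolynomial.X (Fin.castLE hqn i)
      else ∑ j : Fin n,
        if (j : ℕ) < q - 1 then MvPolynomial.C (δ j) * MvPolynomial.X j
        else MvPolynomial.C (δ j) * MvPolynomial.X j ^ 2)
    (M : Submodule (MvPowerSeries (Fin n) ℝ) (Fin q → MvPowerSeries (Fin n) ℝ))
    (hM : M = Submodule.span (MvPowerSeries (Fin n) ℝ)
      ((Set.range fun j : Fin n => fun i : Fin q =>
          ((MvPolynomial.pderiv j (G i) : MvPolynomial (Fin n) ℝ) :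
            MvPowerSeries (Fin n) ℝ)) ∪
        (Set.range fun i : Fin q =>
          Pi.single i ((G i : MvPowerSeries (Fin n) ℝ))))) :
    Submodule.Quotient.mk (p := M)
        (Pi.single (⟨q - 1, by omega⟩ : Fin q) (1 : MvPowerSeries (Fin n) ℝ)) ≠ 0 ∧
    ∀ v : (Fin q → MvPowerSeries (Fin n) ℝ) ⧸ M,
      ∃ c : ℝ, v = c • Submodule.Quotient.mk (p := M)
        (Pi.single (⟨q - 1, by omega⟩ : Fin q) (1 : MvPowerSeries (Fin n) ℝ)) := by
  classical
  have hq1 : q - 1 < q := by omega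
  set iq : Fin q := ⟨q - 1, hq1⟩ with hiqdef
  have hiq : (iq : ℕ) = q - 1 := rfl
  have hiqn : ¬ ((iq : ℕ) < q - 1) := by omega
  set ε : Fin q → ℝ := fun i => δ (Fin.castLE hqn i) with hε
  set e : Fin q → MvPowerSeries (Fin n) ℝ := Pi.single iq 1 with he
  -- δ j ≠ 0
  have hδ0 : ∀ j, δ j ≠ 0 := by
    intro j; rcases hδ j with h | h <;> rw [h] <;> norm_num
  -- polynomial derivatives
  have hpX : ∀ i : Fin q, (i : ℕ) < q - 1 → ∀ j : Fin n,
      MvPolynomial.pderiv j (G i) = if Fin.castLE hqn i = j then 1 else 0 := by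
    intro i hi j
    rw [hG i, if_pos hi, MvPolynomial.pderiv_X, Pi.single_apply]
  have hpd : ∀ j : Fin n, MvPolynomial.pderiv j (G iq) =
      if (j : ℕ) < q - 1 then MvPolynomial.C (δ j)
      else MvPolynomial.C (2 * δ j) * MvPolynomial.X j := by
    intro j
    rw [hG iq, if_neg hiqn, map_sum, Finset.sum_eq_single_of_mem j (Finset.mem_univ _)]
    · split_ifs with hj
      · rw [MvPolynomial.pderiv_C_mul, MvPolynomial.pderiv_X_self, mul_one]
      · rw [MvPolynomial.pderiv_C_mul, MvPolynomial.pderiv_pow, MvPolynomial.pderiv_X_self,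
          mul_one, pow_one, MvPolynomial.C_mul, map_ofNat]
        push_cast
        ring
    · intro k _ hk
      split_ifs with hk2
      · rw [MvPolynomial.pderiv_C_mul, MvPolynomial.pderiv_X_of_ne hk, mul_zero]
      · rw [MvPolynomial.pderiv_C_mul, MvPolynomial.pderiv_pow,
          MvPolynomial.pderiv_X_of_ne hk, mul_zero, mul_zero]
  -- power series derivative vectors
  have hDv2 : ∀ j : Fin n, ∀ hj : (j : ℕ) < q - 1,
      (fun i : Fin q => ((MvPolynomial.pderiv j (G i) : MvPolynomial (Fin n) ℝ) :
          MvPowerSeries (Fin n) ℝ))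
      = Pi.single (⟨(j : ℕ), by omega⟩ : Fin q) 1
          + Pi.single iq ((MvPowerSeries.C (σ := Fin n) (R := ℝ)) (δ j)) := by
    intro j hj
    funext i
    rw [Pi.add_apply]
    by_cases hi : (i : ℕ) < q - 1
    · have hine : i ≠ iq := by
        intro h; rw [h] at hi; exact hiqn hi
      rw [hpX i hi j, Pi.single_eq_of_ne hine, add_zero]
      by_cases hij : (i : ℕ) = (j : ℕ)
      · have h1 : Fin.castLE hqn i = j := Fin.ext (by simpa using hij)
        have h2 : i = (⟨(j : ℕ), by omega⟩ : Fin q) := Fin.ext (by simpa using hij)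
        rw [if_pos h1, h2, Pi.single_eq_same, MvPolynomial.coe_one]
      · have h1 : Fin.castLE hqn i ≠ j := by
          intro h; exact hij (by simpa using congrArg Fin.val h)
        have h2 : i ≠ (⟨(j : ℕ), by omega⟩ : Fin q) := by
          intro h; exact hij (by simpa using congrArg Fin.val h)
        rw [if_neg h1, Pi.single_eq_of_ne h2, MvPolynomial.coe_zero]
    · have hiiq : i = iq := Fin.ext (by have := i.isLt; simp only [hiq]; omega)
      have hne : (⟨(j : ℕ), by omega⟩ : Fin q) ≠ iq := by
        intro h
        have := congrArg Fin.val h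
        simp only [hiq] at this
        omega
      rw [hiiq, hpd j, if_pos hj, Pi.single_eq_of_ne (Ne.symm hne), Pi.single_eq_same,
        MvPolynomial.coe_C, zero_add]
  have hDv1 : ∀ j : Fin n, ∀ _hj : ¬ ((j : ℕ) < q - 1),
      (fun i : Fin q => ((MvPolynomial.pderiv j (G i) : MvPolynomial (Fin n) ℝ) :
          MvPowerSeries (Fin n) ℝ))
      = Pi.single iq ((MvPowerSeries.C (σ := Fin n) (R := ℝ)) (2 * δ j) * MvPowerSeries.X j) := by
    intro j hj
    funext i
    by_cases hi : (i : ℕ) < q - 1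
    · have hine : i ≠ iq := by
        intro h; rw [h] at hi; exact hiqn hi
      have h1 : Fin.castLE hqn i ≠ j := by
        intro h
        have := congrArg Fin.val h
        simp only [Fin.coe_castLE] at this
        omega
      rw [hpX i hi j, if_neg h1, Pi.single_eq_of_ne hine, MvPolynomial.coe_zero]
    · have hiiq : i = iq := Fin.ext (by have := i.isLt; simp only [hiq]; omega)
      rw [hiiq, hpd j, if_neg hj, Pi.single_eq_same, MvPolynomial.coe_mul,
        MvPolynomial.coe_C, MvPolynomial.coe_X]
  -- generators are in M
  have hDmem : ∀ j : Fin n,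
      (fun i : Fin q => ((MvPolynomial.pderiv j (G i) : MvPolynomial (Fin n) ℝ) :
        MvPowerSeries (Fin n) ℝ)) ∈ M := by
    intro j
    rw [hM]
    exact Submodule.subset_span (Set.mem_union_left _ ⟨j, rfl⟩)
  have hEmem : ∀ i : Fin q,
      (Pi.single i ((G i : MvPowerSeries (Fin n) ℝ)) : Fin q → MvPowerSeries (Fin n) ℝ) ∈ M := by
    intro i
    rw [hM]
    exact Submodule.subset_span (Set.mem_union_right _ ⟨i, rfl⟩)
  -- h1 : single iq (X j) ∈ M
  have h1 : ∀ j : Fin n,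
      (Pi.single iq (MvPowerSeries.X j) : Fin q → MvPowerSeries (Fin n) ℝ) ∈ M := by
    intro j
    by_cases hj : (j : ℕ) < q - 1
    · -- use E at ⟨j⟩ and derivative
      set jq : Fin q := ⟨(j : ℕ), by omega⟩ with hjq
      have hcast : Fin.castLE hqn jq = j := Fin.ext (by simp [hjq])
      have hEj : (Pi.single jq (MvPowerSeries.X j) : Fin q → MvPowerSeries (Fin n) ℝ) ∈ M := by
        have := hEmem jq
        rwa [hG jq, if_pos (by simpa [hjq] using hj), hcast, MvPolynomial.coe_X] at this
      have hDj := hDmem j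
      rw [hDv2 j hj] at hDj
      have hkey : (Pi.single iq (MvPowerSeries.X j) : Fin q → MvPowerSeries (Fin n) ℝ)
          = (MvPowerSeries.C (σ := Fin n) (R := ℝ)) (δ j) •
            ((MvPowerSeries.X j : MvPowerSeries (Fin n) ℝ) •
              ((Pi.single jq 1 + Pi.single iq ((MvPowerSeries.C (σ := Fin n) (R := ℝ)) (δ j)) :
                Fin q → MvPowerSeries (Fin n) ℝ))
              - Pi.single jq (MvPowerSeries.X j)) := by
        have hne : jq ≠ iq := by
          intro h
          have := congrArg Fin.val h
          simp only [hjq, hiq] at this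
          omega
        funext i
        simp only [Pi.smul_apply, Pi.sub_apply, Pi.add_apply, smul_eq_mul]
        rcases eq_or_ne i iq with rfl | hi
        · have hδδ : δ j * δ j = 1 := by rcases hδ j with h | h <;> rw [h] <;> norm_num
          simp only [Pi.single_eq_same, Pi.single_eq_of_ne hne.symm, zero_add, sub_zero]
          have hCC : (MvPowerSeries.C (σ := Fin n) (R := ℝ)) (δ j) * (MvPowerSeries.C (σ := Fin n) (R := ℝ)) (δ j) = 1 := by
            rw [← map_mul, hδδ, map_one]
          linear_combination (-(MvPowerSeries.X j)) * hCC
        · rcases eq_or_ne i jq with rfl | hij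
          · simp [Pi.single_eq_of_ne hi]
          · simp [Pi.single_eq_of_ne hi, Pi.single_eq_of_ne hij]
      rw [hkey]
      exact Submodule.smul_mem _ _
        (Submodule.sub_mem _ (Submodule.smul_mem _ _ hDj) hEj)
    · have hDj := hDmem j
      rw [hDv1 j hj] at hDj
      have h2δ : (2 * δ j) ≠ 0 := by
        have := hδ0 j; intro h; apply this; linarith [h]
      have hkey : (Pi.single iq (MvPowerSeries.X j) : Fin q → MvPowerSeries (Fin n) ℝ)
          = (MvPowerSeries.C (σ := Fin n) (R := ℝ)) ((2 * δ j)⁻¹) •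
            (Pi.single iq ((MvPowerSeries.C (σ := Fin n) (R := ℝ)) (2 * δ j) * MvPowerSeries.X j) :
              Fin q → MvPowerSeries (Fin n) ℝ) := by
        funext i
        rcases eq_or_ne i iq with rfl | hi
        · simp only [Pi.smul_apply, Pi.single_eq_same, smul_eq_mul]
          rw [← mul_assoc, ← map_mul, inv_mul_cancel₀ h2δ, map_one, one_mul]
        · simp [Pi.single_eq_of_ne hi]
      rw [hkey]
      exact Submodule.smul_mem _ _ hDj
  -- h2 : the fold generators
  have h2 : ∀ jq : Fin q, (jq : ℕ) < q - 1 →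
      (Pi.single jq 1 + Pi.single iq ((MvPowerSeries.C (σ := Fin n) (R := ℝ)) (ε jq)) :
        Fin q → MvPowerSeries (Fin n) ℝ) ∈ M := by
    intro jq hjq
    have hDj := hDmem (Fin.castLE hqn jq)
    rw [hDv2 _ (by simpa using hjq)] at hDj
    have heq : (⟨((Fin.castLE hqn jq : Fin n) : ℕ), by simpa using (by omega : (jq : ℕ) < q)⟩ :
        Fin q) = jq := Fin.ext (by simp)
    rw [heq] at hDj
    exact hDj
  -- the linear functional
  set ψ : (Fin q → MvPowerSeries (Fin n) ℝ) →ₗ[MvPowerSeries (Fin n) ℝ]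
      MvPowerSeries (Fin n) ℝ :=
    (LinearMap.proj iq : (Fin q → MvPowerSeries (Fin n) ℝ) →ₗ[MvPowerSeries (Fin n) ℝ] _)
      - ∑ j : Fin q, if (j : ℕ) < q - 1 then
          ((MvPowerSeries.C (σ := Fin n) (R := ℝ)) (ε j)) •
            (LinearMap.proj j : (Fin q → MvPowerSeries (Fin n) ℝ)
              →ₗ[MvPowerSeries (Fin n) ℝ] _)
        else 0 with hψdef
  have hψ : ∀ v : Fin q → MvPowerSeries (Fin n) ℝ,
      ψ v = v iq - ∑ j : Fin q, if (j : ℕ) < q - 1 then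
        (MvPowerSeries.C (σ := Fin n) (R := ℝ)) (ε j) * v j else 0 := by
    intro v
    rw [hψdef, LinearMap.sub_apply, LinearMap.sum_apply, LinearMap.proj_apply]
    congr 1
    refine Finset.sum_congr rfl fun j _ => ?_
    rw [apply_ite (fun (F : (Fin q → MvPowerSeries (Fin n) ℝ)
        →ₗ[MvPowerSeries (Fin n) ℝ] MvPowerSeries (Fin n) ℝ) => F v)]
    split_ifs
    · rw [LinearMap.smul_apply, LinearMap.proj_apply, smul_eq_mul]
    · rw [LinearMap.zero_apply]
  -- M is contained in the kernel of constantCoeff ∘ ψ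
  have hMK : M ≤ Submodule.comap ψ
      (RingHom.ker ((MvPowerSeries.constantCoeff (σ := Fin n) (R := ℝ)))) := by
    rw [hM, Submodule.span_le]
    rintro x (⟨j, rfl⟩ | ⟨i, rfl⟩) <;>
      simp only [SetLike.mem_coe, Submodule.mem_comap, RingHom.mem_ker]
    · by_cases hj : (j : ℕ) < q - 1
      · rw [hDv2 j hj, hψ]
        set jq : Fin q := ⟨(j : ℕ), by omega⟩ with hjq
        have hne : jq ≠ iq := by
          intro h; have := congrArg Fin.val h; simp only [hjq, hiq] at this; omega
        have hsum : (∑ k : Fin q, if (k : ℕ) < q - 1 then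
            (MvPowerSeries.C (σ := Fin n) (R := ℝ)) (ε k) *
              ((Pi.single jq 1 + Pi.single iq ((MvPowerSeries.C (σ := Fin n) (R := ℝ)) (δ j)) :
                Fin q → MvPowerSeries (Fin n) ℝ) k) else 0)
            = (MvPowerSeries.C (σ := Fin n) (R := ℝ)) (ε jq) := by
          rw [Finset.sum_eq_single_of_mem jq (Finset.mem_univ _)]
          · rw [if_pos (by simpa [hjq] using hj), Pi.add_apply, Pi.single_eq_same,
              Pi.single_eq_of_ne hne, add_zero, mul_one]
          · intro k _ hk
            split_ifs with hk2
            · have hkiq : k ≠ iq := by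
                intro h; rw [h] at hk2; exact hiqn hk2
              rw [Pi.add_apply, Pi.single_eq_of_ne hk, Pi.single_eq_of_ne hkiq,
                add_zero, mul_zero]
            · rfl
        rw [hsum, Pi.add_apply, Pi.single_eq_of_ne (Ne.symm hne), Pi.single_eq_same, zero_add]
        have hεjq : ε jq = δ j := rfl
        rw [hεjq, sub_self, map_zero]
      · rw [hDv1 j hj, hψ]
        have hsum : (∑ k : Fin q, if (k : ℕ) < q - 1 then
            (MvPowerSeries.C (σ := Fin n) (R := ℝ)) (ε k) *
              ((Pi.single iq ((MvPowerSeries.C (σ := Fin n) (R := ℝ)) (2 * δ j) * MvPowerSeries.X j) :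
                Fin q → MvPowerSeries (Fin n) ℝ) k) else 0) = 0 := by
          refine Finset.sum_eq_zero fun k _ => ?_
          split_ifs with hk2
          · have hkiq : k ≠ iq := by
              intro h; rw [h] at hk2; exact hiqn hk2
            rw [Pi.single_eq_of_ne hkiq, mul_zero]
          · rfl
        rw [hsum, Pi.single_eq_same, sub_zero, map_mul, map_mul,
          MvPowerSeries.constantCoeff_X, mul_zero]
    · rw [hψ]
      by_cases hi : (i : ℕ) < q - 1
      · have hine : i ≠ iq := by
          intro h; rw [h] at hi; exact hiqn hi
        have hsum : (∑ k : Fin q, if (k : ℕ) < q - 1 then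
            (MvPowerSeries.C (σ := Fin n) (R := ℝ)) (ε k) *
              ((Pi.single i ((G i : MvPowerSeries (Fin n) ℝ)) :
                Fin q → MvPowerSeries (Fin n) ℝ) k) else 0)
            = (MvPowerSeries.C (σ := Fin n) (R := ℝ)) (ε i) * ((G i : MvPowerSeries (Fin n) ℝ)) := by
          rw [Finset.sum_eq_single_of_mem i (Finset.mem_univ _)]
          · rw [if_pos hi, Pi.single_eq_same]
          · intro k _ hk
            split_ifs with hk2
            · rw [Pi.single_eq_of_ne hk, mul_zero]
            · rfl
        rw [hsum, Pi.single_eq_of_ne (Ne.symm hine), zero_sub, map_neg, map_mul, neg_eq_zero]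
        rw [hG i, if_pos hi, MvPolynomial.coe_X, MvPowerSeries.constantCoeff_X, mul_zero]
      · have hiiq : i = iq := Fin.ext (by have := i.isLt; simp only [hiq]; omega)
        subst hiiq
        have hsum : (∑ k : Fin q, if (k : ℕ) < q - 1 then
            (MvPowerSeries.C (σ := Fin n) (R := ℝ)) (ε k) *
              ((Pi.single iq ((G iq : MvPowerSeries (Fin n) ℝ)) :
                Fin q → MvPowerSeries (Fin n) ℝ) k) else 0) = 0 := by
          refine Finset.sum_eq_zero fun k _ => ?_
          split_ifs with hk2
          · have hkiq : k ≠ iq := by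
              intro h; rw [h] at hk2; exact hi hk2
            rw [Pi.single_eq_of_ne hkiq, mul_zero]
          · rfl
        rw [hsum, Pi.single_eq_same, sub_zero]
        rw [hG iq, if_neg hi, ← MvPolynomial.coeToMvPowerSeries.ringHom_apply, map_sum, map_sum]
        refine Finset.sum_eq_zero fun k _ => ?_
        split_ifs with hk2 <;>
          simp [MvPolynomial.coeToMvPowerSeries.ringHom_apply, MvPolynomial.coe_mul,
            MvPolynomial.coe_C, MvPolynomial.coe_X, MvPolynomial.coe_pow,
            MvPowerSeries.constantCoeff_X, MvPowerSeries.constantCoeff_C]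
  -- ψ of the distinguished element is 1
  have hψe : ψ e = 1 := by
    rw [hψ, he, Pi.single_eq_same]
    rw [Finset.sum_eq_zero, sub_zero]
    intro k _
    split_ifs with hk2
    · have hkiq : k ≠ iq := by
        intro h; rw [h] at hk2; exact hiqn hk2
      rw [Pi.single_eq_of_ne hkiq, mul_zero]
    · rfl
  constructor
  · intro hcon
    rw [Submodule.Quotient.mk_eq_zero] at hcon
    have := hMK hcon
    rw [Submodule.mem_comap, RingHom.mem_ker] at this
    have h2' : (MvPowerSeries.constantCoeff (σ := Fin n) (R := ℝ)) (ψ e) = 0 := this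
    rw [hψe, map_one] at h2'
    exact one_ne_zero h2'
  · intro v
    obtain ⟨u, rfl⟩ := Submodule.Quotient.mk_surjective M v
    set c : ℝ := (MvPowerSeries.constantCoeff (σ := Fin n) (R := ℝ)) (u iq)
      - ∑ j : Fin q, (if (j : ℕ) < q - 1 then
          ε j * (MvPowerSeries.constantCoeff (σ := Fin n) (R := ℝ)) (u j) else 0) with hc
    refine ⟨c, ?_⟩
    have hce : c • e = Pi.single iq ((MvPowerSeries.C (σ := Fin n) (R := ℝ)) c) := by
      funext i
      rcases eq_or_ne i iq with rfl | hi
      · rw [Pi.smul_apply, he, Pi.single_eq_same, Pi.single_eq_same,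
          Algebra.smul_def, mul_one, MvPowerSeries.c_eq_algebraMap]
      · rw [Pi.smul_apply, he, Pi.single_eq_of_ne hi, Pi.single_eq_of_ne hi, smul_zero]
    have hmem : u - c • e ∈ M := by
      rw [hce]
      refine aux_mem iq hiq hq ε M h1 h2 _ ?_
      have hiqv : ((u - Pi.single iq ((MvPowerSeries.C (σ := Fin n) (R := ℝ)) c) :
          Fin q → MvPowerSeries (Fin n) ℝ)) iq
          = u iq - (MvPowerSeries.C (σ := Fin n) (R := ℝ)) c := by
        rw [Pi.sub_apply, Pi.single_eq_same]
      rw [hiqv, map_sub, MvPowerSeries.constantCoeff_C]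
      have hsum : ∀ j : Fin q, (if (j : ℕ) < q - 1 then
          ε j * (MvPowerSeries.constantCoeff (σ := Fin n) (R := ℝ))
            (((u - Pi.single iq ((MvPowerSeries.C (σ := Fin n) (R := ℝ)) c) :
              Fin q → MvPowerSeries (Fin n) ℝ)) j) else 0)
          = (if (j : ℕ) < q - 1 then
              ε j * (MvPowerSeries.constantCoeff (σ := Fin n) (R := ℝ)) (u j) else 0) := by
        intro j
        split_ifs with hj
        · have hjne : j ≠ iq := by
            intro h; rw [h] at hj; exact hiqn hj
          rw [Pi.sub_apply, Pi.single_eq_of_ne hjne, sub_zero]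
        · rfl
      rw [Finset.sum_congr rfl fun j _ => hsum j, hc]
      ring
    have := (Submodule.Quotient.eq M).2 hmem
    rw [this, ← Submodule.Quotient.mk_smul]
end
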